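/- Let T be a triangulated category, let (U, V) be a stable t-structure in T, and let X be a thick subcategory of T. Then U * X is a triangulated subcategory of T if and only if (X ∩ U, X ∩ V) is a stable t-structure in X. -/

import Mathlib

namespace Paper

open CategoryTheory Limits Triangulated Pretriangulated ZeroObject

universe w v u

variable {C : Type u} [Category.{v} C] [HasZeroObject C] [Preadditive C] [HasShift C ℤ]
  [∀ n : ℤ, (shiftFunctor C n).Additive] [Pretriangulated C]

/-- The subcategory of extensions `X * Y`: objects `e` admitting a distinguished triangle
`x ⟶ e ⟶ y ⟶ x⟦1⟧` with `x ∈ X` and `y ∈ Y`. -/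
def star (X Y : Set C) : Set C :=
  {e | ∃ (x y : C) (_ : x ∈ X) (_ : y ∈ Y) (f : x ⟶ e) (g : e ⟶ y) (h : y ⟶ x⟦(1 : ℤ)⟧),
    Triangle.mk f g h ∈ distTriang C}

/-- A (strictly full) triangulated subcategory: a class of objects containing `0`, closed
under isomorphisms, suspension, desuspension and extensions. -/
structure IsTriangulatedSubcat (S : Set C) : Prop where
  zero_mem : (0 : C) ∈ S
  mem_of_iso : ∀ {a b : C}, (a ≅ b) → a ∈ S → b ∈ S
  shift_mem : ∀ {a : C}, a ∈ S → a⟦(1 : ℤ)⟧ ∈ S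
  unshift_mem : ∀ {a : C}, a ∈ S → a⟦(-1 : ℤ)⟧ ∈ S
  ext₂ : ∀ {a e b : C} (f : a ⟶ e) (g : e ⟶ b) (h : b ⟶ a⟦(1 : ℤ)⟧),
    (Triangle.mk f g h ∈ distTriang C) → a ∈ S → b ∈ S → e ∈ S

/-- A thick subcategory: a triangulated subcategory closed under direct summands
(equivalently, retracts). -/
structure IsThickSubcat (S : Set C) extends IsTriangulatedSubcat S : Prop where
  mem_of_retract : ∀ {a s : C}, s ∈ S → (∃ (i : a ⟶ s) (p : s ⟶ a), i ≫ p = 𝟙 a) → a ∈ S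

/-- `(U, V)` is a stable t-structure in the (triangulated sub)category whose class of
objects is `S`: both are triangulated subcategories contained in `S`, `Hom(U, V) = 0`
and `U * V = S`. -/
structure IsStableTStructureIn (S U V : Set C) : Prop where
  subsetU : U ⊆ S
  subsetV : V ⊆ S
  triU : IsTriangulatedSubcat U
  triV : IsTriangulatedSubcat V
  hom_zero : ∀ {u v : C}, u ∈ U → v ∈ V → ∀ f : u ⟶ v, f = 0
  star_eq : star U V = S

lemma IsTriangulatedSubcat.shift_all {S : Set C} (hS : IsTriangulatedSubcat S) (a : C) (n : ℤ)
    (ha : a ∈ S) : a⟦n⟧ ∈ S := by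
  induction n using Int.induction_on with
  | zero => exact hS.mem_of_iso ((shiftFunctorZero C ℤ).app a).symm ha
  | succ i hi =>
      exact hS.mem_of_iso ((shiftFunctorAdd' C (i : ℤ) 1 ((i : ℤ) + 1) rfl).app a).symm
        (hS.shift_mem hi)
  | pred i hi =>
      exact hS.mem_of_iso
        ((shiftFunctorAdd' C (-(i : ℤ)) (-1) (-(i : ℤ) - 1) (by ring)).app a).symm
        (hS.unshift_mem hi)

namespace Triangulated

variable (C) in
/-- The December 2024 Mathlib `Triangulated.Subcategory` (removed since), restored verbatim. -/
structure Subcategory where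
  P : C → Prop
  zero' : ∃ (Z : C) (_ : IsZero Z), P Z
  shift (X : C) (n : ℤ) : P X → P (X⟦n⟧)
  ext₂' (T : Triangle C) (_ : T ∈ distTriang C) : P T.obj₁ → P T.obj₃ →
    (∃ (Y : C) (_ : P Y), Nonempty (T.obj₂ ≅ Y))

/-- The old `Triangulated.Subcategory.mk'`. -/
def Subcategory.mk' (P : C → Prop) (zero : P 0)
    (shift : ∀ (X : C) (n : ℤ), P X → P (X⟦n⟧))
    (ext₂ : ∀ (T : Triangle C) (_ : T ∈ distTriang C), P T.obj₁ → P T.obj₃ → P T.obj₂) :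
    Subcategory C where
  P := P
  zero' := ⟨0, isZero_zero _, zero⟩
  shift := shift
  ext₂' T hT h₁ h₃ := ⟨T.obj₂, ext₂ T hT h₁ h₃, ⟨Iso.refl _⟩⟩

/-- The old `Triangulated.Subcategory.W`. -/
def Subcategory.W (S : Subcategory C) : MorphismProperty C := fun X Y f =>
  ∃ (Z : C) (g : Y ⟶ Z) (h : Z ⟶ X⟦(1 : ℤ)⟧) (_ : Triangle.mk f g h ∈ distTriang C), S.P Z

end Triangulated

/-- The Mathlib `Triangulated.Subcategory` associated to a class of objects satisfying
`IsTriangulatedSubcat`. -/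
def IsTriangulatedSubcat.toSubcategory {S : Set C} (hS : IsTriangulatedSubcat S) :
    Triangulated.Subcategory C :=
  Triangulated.Subcategory.mk' (· ∈ S) hS.zero_mem (fun a n ha => hS.shift_all a n ha)
    (fun T hT h₁ h₃ => hS.ext₂ T.mor₁ T.mor₂ T.mor₃ hT h₁ h₃)

lemma IsTriangulatedSubcat.inter {X Y : Set C} (hX : IsTriangulatedSubcat X)
    (hY : IsTriangulatedSubcat Y) : IsTriangulatedSubcat (X ∩ Y) where
  zero_mem := ⟨hX.zero_mem, hY.zero_mem⟩
  mem_of_iso := fun e h => ⟨hX.mem_of_iso e h.1, hY.mem_of_iso e h.2⟩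
  shift_mem := fun h => ⟨hX.shift_mem h.1, hY.shift_mem h.2⟩
  unshift_mem := fun h => ⟨hX.unshift_mem h.1, hY.unshift_mem h.2⟩
  ext₂ := fun f g h hT ha hb => ⟨hX.ext₂ f g h hT ha.1 hb.1, hY.ext₂ f g h hT ha.2 hb.2⟩

/-- The Verdier quotient of `C` by the triangulated subcategory `S`. -/
abbrev VerdierQuotient {S : Set C} (hS : IsTriangulatedSubcat S) : Type _ :=
  hS.toSubcategory.W.Localization

/-- The Verdier quotient functor. -/
noncomputable abbrev Vq {S : Set C} (hS : IsTriangulatedSubcat S) : C ⥤ VerdierQuotient hS :=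
  hS.toSubcategory.W.Q

/-- The essential image of a class of objects under a functor (the closure under
isomorphisms of the image). -/
def QSet {D : Type*} [Category D] (L : C ⥤ D) (S : Set C) : Set D :=
  {d | ∃ s ∈ S, Nonempty (L.obj s ≅ d)}

/-- The right perpendicular class `X^⊥`. -/
def rightPerp (X : Set C) : Set C := {t | ∀ {x : C}, x ∈ X → ∀ f : x ⟶ t, f = 0}

/-- The left perpendicular class `^⊥X`. -/
def leftPerp (X : Set C) : Set C := {t | ∀ {x : C}, x ∈ X → ∀ f : t ⟶ x, f = 0}


section Helpers

lemma star_mono {A A' B B' : Set C} (hA : A ⊆ A') (hB : B ⊆ B') : star A B ⊆ star A' B' := by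
  rintro e ⟨x, y, hx, hy, f, g, h, hT⟩
  exact ⟨x, y, hA hx, hB hy, f, g, h, hT⟩

lemma star_iso {A B : Set C} {e e' : C} (i : e ≅ e') (he : e ∈ star A B) : e' ∈ star A B := by
  obtain ⟨x, y, hx, hy, f, g, h, hT⟩ := he
  refine ⟨x, y, hx, hy, f ≫ i.hom, i.inv ≫ g, h,
    isomorphic_distinguished _ hT _
      (Triangle.isoMk _ _ (Iso.refl _) i.symm (Iso.refl _) ?_ ?_ ?_)⟩
  · change (f ≫ i.hom) ≫ i.inv = 𝟙 x ≫ f; simp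
  · change (i.inv ≫ g) ≫ 𝟙 y = i.inv ≫ g; simp
  · change h ≫ (shiftFunctor C (1 : ℤ)).map (𝟙 x) = 𝟙 y ≫ h; simp

lemma subset_star_left {A B : Set C} (h0 : (0 : C) ∈ B) : A ⊆ star A B := fun a ha =>
  ⟨a, 0, ha, h0, 𝟙 a, 0, 0, contractible_distinguished a⟩

lemma subset_star_right {A B : Set C} (h0 : (0 : C) ∈ A) : B ⊆ star A B := fun b hb =>
  ⟨0, b, h0, hb, 0, 𝟙 b, 0, contractible_distinguished₁ b⟩

lemma star_self {A : Set C} (hA : IsTriangulatedSubcat A) : star A A ⊆ A := by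
  rintro e ⟨x, y, hx, hy, f, g, h, hT⟩
  exact hA.ext₂ f g h hT hx hy

lemma star_shift {A B : Set C} (hA : IsTriangulatedSubcat A) (hB : IsTriangulatedSubcat B)
    {e : C} (he : e ∈ star A B) (n : ℤ) : e⟦n⟧ ∈ star A B := by
  obtain ⟨x, y, hx, hy, f, g, h, hT⟩ := he
  exact ⟨x⟦n⟧, y⟦n⟧, hA.shift_all x n hx, hB.shift_all y n hy, _, _, _,
    Triangle.shift_distinguished _ hT n⟩

lemma star_swap {A B : Set C} (hz : ∀ {a b : C}, a ∈ A → b ∈ B → ∀ f : a ⟶ b⟦(1 : ℤ)⟧, f = 0) :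
    star B A ⊆ star A B := by
  rintro e ⟨b, a, hb, ha, f, g, h, hT⟩
  have h0 : h = 0 := hz ha hb h
  obtain ⟨s, hs⟩ : ∃ s : a ⟶ e, 𝟙 a = s ≫ g :=
    Triangle.coyoneda_exact₃ _ hT (𝟙 a) (by change 𝟙 a ≫ h = 0; simp [h0])
  let φ : b ⊞ a ⟶ e := biprod.desc f s
  have hfg : f ≫ g = 0 := comp_distTriang_mor_zero₁₂ _ hT
  let ψ : binaryBiproductTriangle b a ⟶ Triangle.mk f g h :=
    { hom₁ := 𝟙 b
      hom₂ := φ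
      hom₃ := 𝟙 a
      comm₁ := by change (biprod.inl : b ⟶ b ⊞ a) ≫ φ = 𝟙 b ≫ f; simp [φ]
      comm₂ := by
        change (biprod.snd : b ⊞ a ⟶ a) ≫ 𝟙 a = φ ≫ g
        dsimp [φ]
        ext
        · simp [hfg]
        · simp [← hs]
      comm₃ := by
        change (0 : a ⟶ b⟦(1 : ℤ)⟧) ≫ (shiftFunctor C (1 : ℤ)).map (𝟙 b) = 𝟙 a ≫ h
        simp [h0] }
  have : IsIso ψ.hom₂ :=
    isIso₂_of_isIso₁₃ ψ (binaryBiproductTriangle_distinguished b a) hT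
      (by change IsIso (𝟙 b); infer_instance) (by change IsIso (𝟙 a); infer_instance)
  refine star_iso ((biprod.braiding a b) ≪≫ (@asIso _ _ (b ⊞ a) e ψ.hom₂ this)) ?_
  exact ⟨a, b, ha, hb, biprod.inl, biprod.snd, 0, binaryBiproductTriangle_distinguished a b⟩

lemma star_assoc₁ [IsTriangulated C] {A B D : Set C} :
    star (star A B) D ⊆ star A (star B D) := by
  rintro e ⟨m, d, ⟨a, b, ha, hb, f, g, h, hT'⟩, hd, i, j, k, hT⟩
  obtain ⟨Z, p, q, hZ⟩ := distinguished_cocone_triangle (f ≫ i)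
  have oct := someOctahedron rfl hT' hT hZ
  exact ⟨a, Z, ha, ⟨b, d, hb, hd, _, _, _, oct.mem⟩, f ≫ i, p, q, hZ⟩

lemma star_assoc₂ [IsTriangulated C] {A B D : Set C} (hA : IsTriangulatedSubcat A)
    (hB : IsTriangulatedSubcat B) :
    star A (star B D) ⊆ star (star A B) D := by
  rintro e ⟨a, n, ha, ⟨b, d, hb, hd, f, g, h, hT'⟩, i, j, k, hT⟩
  obtain ⟨Z, p, q, hZ⟩ := distinguished_cocone_triangle (j ≫ g)
  have oct := someOctahedron rfl (rot_of_distTriang _ hT) (rot_of_distTriang _ hT') hZ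
  refine ⟨Z⟦(-1 : ℤ)⟧, d, ?_, hd, _, _, _, inv_rot_of_distTriang _ hZ⟩
  exact ⟨a⟦(1 : ℤ)⟧⟦(-1 : ℤ)⟧, b⟦(1 : ℤ)⟧⟦(-1 : ℤ)⟧, hA.unshift_mem (hA.shift_mem ha),
    hB.unshift_mem (hB.shift_mem hb), _, _, _, Triangle.shift_distinguished _ oct.mem (-1)⟩

end Helpers


variable [IsTriangulated C]


/-- Let `(U, V)` be a stable t-structure in `C` and `X` a thick subcategory.  Then
`U * X` is a triangulated subcategory of `C` if and only if `(X ∩ U, X ∩ V)` is a stable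
t-structure in `X`. -/
theorem statement10 {U V X : Set C} (hUV : IsStableTStructureIn Set.univ U V)
    (hX : IsThickSubcat X) :
    IsTriangulatedSubcat (star U X) ↔ IsStableTStructureIn X (X ∩ U) (X ∩ V) := by
  constructor
  · -- forward direction
    intro hS
    have hXU : IsTriangulatedSubcat (X ∩ U) :=
      IsTriangulatedSubcat.inter hX.toIsTriangulatedSubcat hUV.triU
    have hXV : IsTriangulatedSubcat (X ∩ V) :=
      IsTriangulatedSubcat.inter hX.toIsTriangulatedSubcat hUV.triV
    refine ⟨Set.inter_subset_left, Set.inter_subset_left, hXU, hXV,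
      fun hu hv f => hUV.hom_zero hu.2 hv.2 f, ?_⟩
    apply Set.Subset.antisymm
    · rintro e ⟨a, b, ha, hb, f, g, h, hT⟩
      exact hX.ext₂ f g h hT ha.1 hb.1
    · intro x hx
      have hx' : x ∈ star U V := hUV.star_eq.symm ▸ Set.mem_univ x
      obtain ⟨u, v, hu, hv, f, g, h, hT⟩ := hx'
      have hxS : x ∈ star U X := subset_star_right hUV.triU.zero_mem hx
      have huS : u ∈ star U X := subset_star_left hX.zero_mem hu
      have hvS : v ∈ star U X :=
        hS.ext₂ g h (-(f⟦(1 : ℤ)⟧')) (rot_of_distTriang _ hT) hxS (hS.shift_mem huS)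
      obtain ⟨u', x', hu', hx', f', g', h', hT'⟩ := hvS
      have hf'0 : f' = 0 := hUV.hom_zero hu' hv f'
      obtain ⟨p, hp⟩ : ∃ p : x' ⟶ v, 𝟙 v = g' ≫ p :=
        Triangle.yoneda_exact₂ _ hT' (𝟙 v) (by change f' ≫ 𝟙 v = 0; simp [hf'0])
      have hvX : v ∈ X := hX.mem_of_retract hx' ⟨g', p, hp.symm⟩
      have huX : u ∈ X :=
        hX.ext₂ _ _ _ (inv_rot_of_distTriang _ hT) (hX.unshift_mem hvX) hx
      exact ⟨u, v, ⟨huX, hu⟩, ⟨hvX, hv⟩, f, g, h, hT⟩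
  · -- backward direction
    intro h'
    have hXU : IsTriangulatedSubcat (X ∩ U) :=
      IsTriangulatedSubcat.inter hX.toIsTriangulatedSubcat hUV.triU
    have hXV : IsTriangulatedSubcat (X ∩ V) :=
      IsTriangulatedSubcat.inter hX.toIsTriangulatedSubcat hUV.triV
    have hz : ∀ {a b : C}, a ∈ U → b ∈ X ∩ V → ∀ f : a ⟶ b⟦(1 : ℤ)⟧, f = 0 :=
      fun ha hb f => hUV.hom_zero ha (hUV.triV.shift_mem hb.2) f
    -- star U X = star U (X ∩ V)
    have hUXU : star U (X ∩ U) ⊆ U :=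
      fun e he => star_self hUV.triU (star_mono (le_refl U) Set.inter_subset_right he)
    have key₁ : star U X ⊆ star U (X ∩ V) := by
      intro e he
      rw [← h'.star_eq] at he
      exact star_mono hUXU (le_refl _)
        (star_assoc₂ hUV.triU hXU (star_mono (le_refl U) (le_refl _) he))
    -- the key closure: star U (X ∩ V) is closed under extensions
    have hext : star (star U (X ∩ V)) (star U (X ∩ V)) ⊆ star U (X ∩ V) := by
      intro e he
      have h1 : e ∈ star U (star (X ∩ V) (star U (X ∩ V))) := star_assoc₁ he
      have h2 : star (X ∩ V) (star U (X ∩ V)) ⊆ star U (X ∩ V) := by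
        intro m hm
        have h3 : m ∈ star (star (X ∩ V) U) (X ∩ V) := star_assoc₂ hXV hUV.triU hm
        have h4 : m ∈ star (star U (X ∩ V)) (X ∩ V) :=
          star_mono (star_swap hz) (le_refl _) h3
        have h5 : m ∈ star U (star (X ∩ V) (X ∩ V)) := star_assoc₁ h4
        exact star_mono (le_refl U) (star_self hXV) h5
      have h6 : e ∈ star U (star U (X ∩ V)) := star_mono (le_refl U) h2 h1
      have h7 : e ∈ star (star U U) (X ∩ V) := star_assoc₂ hUV.triU hUV.triU h6
      exact star_mono (star_self hUV.triU) (le_refl _) h7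
    have key₂ : star U (X ∩ V) ⊆ star U X := star_mono (le_refl U) Set.inter_subset_left
    exact
      { zero_mem := subset_star_left hX.zero_mem hUV.triU.zero_mem
        mem_of_iso := fun i he => star_iso i he
        shift_mem := fun he => star_shift hUV.triU hX.toIsTriangulatedSubcat he 1
        unshift_mem := fun he => star_shift hUV.triU hX.toIsTriangulatedSubcat he (-1)
        ext₂ := fun f g h hT ha hb =>
          key₂ (hext ⟨_, _, key₁ ha, key₁ hb, f, g, h, hT⟩) }

end Paper
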